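/- Let G = (V,E) be a graph with a gap-free ordering σ = v_1,…,v_n, and let V* = {v_p, v_{p+1}, …, v_q} be an interval of vertices such that each vertex in V_1 = {v_1,…,v_{p-1}} has all its neighbors among V_1 ∪ V* and each vertex of V* is adjacent to every other vertex of V* (G[V*] is a clique). Then for any two vertices v_i, v_j ∈ V_1 with i < j and N_G(v_i) ∩ V* ≠ ∅ ≠ N_G(v_j) ∩ V*, it holds that N_G(v_i) ∩ V* ⊆ N_G(v_j) ∩ V*. (Neighborhoods into the clique are nested along the ordering.) -/
import Mathlib


/-- Gap condition (g1) for the index pair `(i,j)` under ordering `σ`. -/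
def GapG1 {V : Type*} {n : ℕ} (G : SimpleGraph V) (σ : Fin n ≃ V) (i j : Fin n) : Prop :=
  (∃ j' j'' : Fin n, j' < j ∧ j < j'' ∧ G.Adj (σ i) (σ j') ∧ G.Adj (σ i) (σ j'')) ∨
  (∃ i' i'' : Fin n, i' < i ∧ i < i'' ∧ G.Adj (σ i') (σ j) ∧ G.Adj (σ i'') (σ j))

/-- Gap condition (g2). -/
def GapG2 {V : Type*} {n : ℕ} (G : SimpleGraph V) (σ : Fin n ≃ V) (i j : Fin n) : Prop :=
  ∃ i' j' : Fin n, j' < i ∧ j < i' ∧ G.Adj (σ i) (σ i') ∧ G.Adj (σ j') (σ j)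

/-- Gap condition (g3). -/
def GapG3 {V : Type*} {n : ℕ} (G : SimpleGraph V) (σ : Fin n ≃ V) (i j : Fin n) : Prop :=
  ∃ i' j' : Fin n, i' < j ∧ i < j' ∧ G.Adj (σ i) (σ i') ∧ G.Adj (σ j) (σ j')

/-- `σ` is a gap-free ordering of the vertices of `G`: no non-adjacent pair
satisfies any of (g1), (g2), (g3). -/
def GapFree {V : Type*} {n : ℕ} (G : SimpleGraph V) (σ : Fin n ≃ V) : Prop :=
  ∀ i j : Fin n, i < j → ¬ G.Adj (σ i) (σ j) →
    ¬ (GapG1 G σ i j ∨ GapG2 G σ i j ∨ GapG3 G σ i j)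

/-- Let `V* = {v_p,…,v_q}` induce a clique, and suppose every vertex of
`V₁ = {v₁,…,v_{p-1}}` has all neighbors in `V₁ ∪ V*`. In a gap-free ordering,
the neighborhoods into the clique are nested along the ordering:
for `i < j < p`, `N(vᵢ) ∩ V* ⊆ N(vⱼ) ∩ V*` (whenever both are nonempty). -/
theorem clique_neighborhoods_nested
    {V : Type*} {n : ℕ} (G : SimpleGraph V) (σ : Fin n ≃ V)
    (hgf : GapFree G σ) (p q : Fin n) (hpq : p ≤ q)
    (hV1 : ∀ i j : Fin n, i < p → G.Adj (σ i) (σ j) → j ≤ q)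
    (hclique : ∀ k l : Fin n, p ≤ k → k ≤ q → p ≤ l → l ≤ q → k ≠ l →
      G.Adj (σ k) (σ l)) :
    ∀ i j : Fin n, i < j → j < p →
      (∃ k : Fin n, p ≤ k ∧ k ≤ q ∧ G.Adj (σ i) (σ k)) →
      (∃ k : Fin n, p ≤ k ∧ k ≤ q ∧ G.Adj (σ j) (σ k)) →
      ∀ k : Fin n, p ≤ k → k ≤ q → G.Adj (σ i) (σ k) → G.Adj (σ j) (σ k) := by
  intro i j hij hjp _ hj k hpk hkq hik
  obtain ⟨l, hpl, hlq, hjl⟩ := hj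
  by_contra hnadj
  by_cases hlk : l = k
  · exact hnadj (hlk ▸ hjl)
  · have hjk : j < k := lt_of_lt_of_le hjp hpk
    exact hgf j k hjk hnadj (Or.inl (Or.inr ⟨i, l, hij, lt_of_lt_of_le hjp hpl,
      hik, hclique l k hpl hlq hpk hkq hlk⟩))
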